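/- Let d ≥ 1, let Δ ⊆ ℝ^d be a reflexive polytope, and let Δ = Δ_1 + … + Δ_r be a Minkowski sum decomposition where each Δ_i is a lattice polytope containing 0. Then for every extreme point e of Δ*, there is exactly one index i such that min_{x ∈ Δ_i} ⟨x, e⟩ = -1, and for every other index j the minimum of ⟨x, e⟩ over x ∈ Δ_j equals 0. -/

import Mathlib

open Pointwise

/-- The standard inner product on `ℝ^d`. -/
def dotp {d : ℕ} (x y : Fin d → ℝ) : ℝ := ∑ i, x i * y i

/-- A point of `ℝ^d` with integer coordinates (a lattice point of `ℤ^d`). -/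
def IsLatticePt {d : ℕ} (x : Fin d → ℝ) : Prop := ∀ i, ∃ n : ℤ, x i = (n : ℝ)

/-- A lattice polytope: the convex hull of a finite set of lattice points. -/
def IsLatticePolytope {d : ℕ} (P : Set (Fin d → ℝ)) : Prop :=
  ∃ S : Finset (Fin d → ℝ), (∀ x ∈ S, IsLatticePt x) ∧ P = convexHull ℝ (S : Set (Fin d → ℝ))

/-- The dual set `A* = {x : ⟨y,x⟩ ≥ -1 ∀ y ∈ A}`. -/
def dualSet {d : ℕ} (A : Set (Fin d → ℝ)) : Set (Fin d → ℝ) :=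
  {x | ∀ y ∈ A, -1 ≤ dotp y x}

/-- A reflexive polytope: a lattice polytope with `0` in its interior whose dual is
also a lattice polytope. -/
def IsReflexivePolytope {d : ℕ} (P : Set (Fin d → ℝ)) : Prop :=
  IsLatticePolytope P ∧ (0 : Fin d → ℝ) ∈ interior P ∧ IsLatticePolytope (dualSet P)

/-- The minimum (infimum) of `⟨x, z⟩` over `x ∈ A`. -/
noncomputable def minDot {d : ℕ} (A : Set (Fin d → ℝ)) (z : Fin d → ℝ) : ℝ :=
  sInf ((fun x => dotp x z) '' A)


lemma dotp_add_left {d : ℕ} (x y z : Fin d → ℝ) : dotp (x + y) z = dotp x z + dotp y z := by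
  simp [dotp, add_mul, Finset.sum_add_distrib]

lemma dotp_smul_left {d : ℕ} (c : ℝ) (x z : Fin d → ℝ) : dotp (c • x) z = c * dotp x z := by
  simp [dotp, Finset.mul_sum, mul_assoc]

lemma dotp_smul_right {d : ℕ} (c : ℝ) (x z : Fin d → ℝ) : dotp x (c • z) = c * dotp x z := by
  simp only [dotp, Finset.mul_sum, Pi.smul_apply, smul_eq_mul]
  exact Finset.sum_congr rfl fun i _ => by ring

lemma dotp_zero_left {d : ℕ} (z : Fin d → ℝ) : dotp 0 z = 0 := by simp [dotp]
lemma dotp_zero_right {d : ℕ} (z : Fin d → ℝ) : dotp z 0 = 0 := by simp [dotp]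

lemma dotp_neg_right {d : ℕ} (x z : Fin d → ℝ) : dotp x (-z) = -dotp x z := by
  simp [dotp, ← Finset.sum_neg_distrib]

lemma dotp_sum_left {d n : ℕ} (x : Fin n → (Fin d → ℝ)) (z : Fin d → ℝ) :
    dotp (∑ i, x i) z = ∑ i, dotp (x i) z := by
  induction n with
  | zero => simp [dotp]
  | succ n ih => rw [Fin.sum_univ_succ, Fin.sum_univ_succ, dotp_add_left, ih]

lemma dotp_int {d : ℕ} {x y : Fin d → ℝ} (hx : IsLatticePt x) (hy : IsLatticePt y) :
    ∃ n : ℤ, dotp x y = (n : ℝ) := by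
  choose f hf using hx
  choose g hg using hy
  refine ⟨∑ i, f i * g i, ?_⟩
  rw [dotp]
  push_cast
  exact Finset.sum_congr rfl fun i _ => by rw [hf i, hg i]

lemma convex_ge {d : ℕ} (c : ℝ) (z : Fin d → ℝ) : Convex ℝ {x : Fin d → ℝ | c ≤ dotp x z} := by
  intro x hx y hy a b ha hb hab
  simp only [Set.mem_setOf_eq] at *
  rw [dotp_add_left, dotp_smul_left, dotp_smul_left]
  calc c = a * c + b * c := by rw [← add_mul, hab, one_mul]
  _ ≤ a * dotp x z + b * dotp y z := by gcongr

lemma hull_lb {d : ℕ} {S : Finset (Fin d → ℝ)} {c : ℝ} {z : Fin d → ℝ}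
    (h : ∀ s ∈ S, c ≤ dotp s z) :
    ∀ x ∈ convexHull ℝ (S : Set (Fin d → ℝ)), c ≤ dotp x z := fun x hx =>
  convexHull_min (fun s hs => h s hs : (S : Set (Fin d → ℝ)) ⊆ {x | c ≤ dotp x z})
    (convex_ge c z) hx

lemma minDot_hull {d : ℕ} (S : Finset (Fin d → ℝ)) (hS : S.Nonempty) (z : Fin d → ℝ) :
    ∃ s0 ∈ S, minDot (convexHull ℝ (S : Set (Fin d → ℝ))) z = dotp s0 z ∧
      ∀ x ∈ convexHull ℝ (S : Set (Fin d → ℝ)), dotp s0 z ≤ dotp x z := by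
  obtain ⟨s0, hs0, hmin⟩ := S.exists_min_image (fun s => dotp s z) hS
  have hlb := hull_lb (c := dotp s0 z) (z := z) hmin
  refine ⟨s0, hs0, ?_, hlb⟩
  apply le_antisymm
  · exact csInf_le ⟨dotp s0 z, by rintro _ ⟨x, hx, rfl⟩; exact hlb x hx⟩
      ⟨s0, subset_convexHull ℝ _ hs0, rfl⟩
  · exact le_csInf ⟨dotp s0 z, s0, subset_convexHull ℝ _ hs0, rfl⟩
      (by rintro _ ⟨x, hx, rfl⟩; exact hlb x hx)

/-- for every vertex `e` of `Δ*` exactly one part of the Minkowski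
decomposition has minimum `-1` against `e`, and all other parts have minimum `0`. -/
theorem exists_unique_part_with_min_neg_one {d r : ℕ} (hd : 1 ≤ d)
    (Δ : Set (Fin d → ℝ)) (hΔ : IsReflexivePolytope Δ)
    (D : Fin r → Set (Fin d → ℝ)) (hlat : ∀ i, IsLatticePolytope (D i))
    (h0 : ∀ i, (0 : Fin d → ℝ) ∈ D i) (hsum : Δ = ∑ i, D i)
    (e : Fin d → ℝ) (he : e ∈ Set.extremePoints ℝ (dualSet Δ)) :
    ∃ i, minDot (D i) e = -1 ∧ ∀ j, j ≠ i → minDot (D j) e = 0 := by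
  classical
  -- e is in the dual set
  have heΔ : e ∈ dualSet Δ := he.1
  -- e is a lattice point (vertex of the dual lattice polytope)
  obtain ⟨S', hS'lat, hS'⟩ := hΔ.2.2
  have helat : IsLatticePt e := by
    apply hS'lat
    have := extremePoints_convexHull_subset (𝕜 := ℝ) (A := (S' : Set (Fin d → ℝ)))
    rw [← hS'] at this
    exact this he
  -- decompose each part
  have key : ∀ i, ∃ S : Finset (Fin d → ℝ), (∀ x ∈ S, IsLatticePt x) ∧
      D i = convexHull ℝ (S : Set (Fin d → ℝ)) := hlat
  choose S hSlat hSD using key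
  have hSne : ∀ i, (S i).Nonempty := by
    intro i
    by_contra h
    rw [Finset.not_nonempty_iff_eq_empty] at h
    have := h0 i
    rw [hSD i, h] at this
    simp at this
  -- get minimizers
  have key2 : ∀ i, ∃ p ∈ S i, minDot (D i) e = dotp p e ∧
      ∀ x ∈ D i, dotp p e ≤ dotp x e := by
    intro i
    rw [hSD i]
    exact minDot_hull (S i) (hSne i) e
  choose p hpS hpmin hplb using key2
  -- each value is an integer
  have hint : ∀ i, ∃ n : ℤ, dotp (p i) e = (n : ℝ) :=
    fun i => dotp_int (hSlat i (p i) (hpS i)) helat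
  choose q hq using hint
  -- each value is ≤ 0
  have hq0 : ∀ i, (q i : ℝ) ≤ 0 := by
    intro i
    rw [← hq i]
    have := hplb i 0 (h0 i)
    rwa [dotp_zero_left] at this
  have hqz : ∀ i, q i ≤ 0 := fun i => by exact_mod_cast hq0 i
  -- the total sum point
  set P : Fin d → ℝ := ∑ i, p i with hP
  have hPΔ : P ∈ Δ := by
    rw [hsum]
    exact Set.finset_sum_mem_finset_sum Finset.univ D p
      (fun i _ => by rw [hSD i]; exact subset_convexHull ℝ _ (hpS i))
  have hPval : dotp P e = ∑ i, (q i : ℝ) := by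
    rw [hP, dotp_sum_left]
    exact Finset.sum_congr rfl fun i _ => hq i
  -- lower bound on Δ
  have hΔlb : ∀ x ∈ Δ, dotp P e ≤ dotp x e := by
    intro x hx
    rw [hsum] at hx
    rw [Set.mem_fintype_sum] at hx
    obtain ⟨g, hg, rfl⟩ := hx
    rw [hP, dotp_sum_left, dotp_sum_left]
    exact Finset.sum_le_sum fun i _ => hplb i (g i) (hg i)
  -- e ≠ 0
  have hene : e ≠ 0 := by
    rintro rfl
    obtain ⟨SΔ, _, hSΔ⟩ := hΔ.1
    have hSΔne : SΔ.Nonempty := by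
      by_contra h
      rw [Finset.not_nonempty_iff_eq_empty] at h
      have h0Δ : (0 : Fin d → ℝ) ∈ Δ := interior_subset hΔ.2.1
      rw [hSΔ, h] at h0Δ
      simp at h0Δ
    set u : Fin d → ℝ := Pi.single (⟨0, hd⟩ : Fin d) 1 with hu
    set M : ℝ := SΔ.sup' hSΔne (fun s => |dotp s u|) with hM
    obtain ⟨s0, hs0⟩ := hSΔne
    have hM0 : 0 ≤ M := by
      rw [hM]; exact le_trans (abs_nonneg (dotp s0 u)) (Finset.le_sup' (fun s => |dotp s u|) hs0)
    set ε : ℝ := 1 / (M + 1) with hε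
    have hεpos : 0 < ε := by positivity
    have hbd : ∀ s ∈ SΔ, |dotp s (ε • u)| ≤ 1 := by
      intro s hs
      rw [dotp_smul_right, abs_mul, abs_of_pos hεpos]
      have h1 : |dotp s u| ≤ M := by rw [hM]; exact Finset.le_sup' (fun s => |dotp s u|) hs
      calc ε * |dotp s u| ≤ ε * (M + 1) := by nlinarith
      _ = 1 := by
          have hne : M + 1 ≠ 0 := by positivity
          rw [hε]; field_simp
    have hv : ε • u ∈ dualSet Δ := by
      intro y hy
      rw [hSΔ] at hy
      refine hull_lb (fun s hs => ?_) y hy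
      linarith [abs_le.mp (hbd s hs) |>.1]
    have hv' : -(ε • u) ∈ dualSet Δ := by
      intro y hy
      rw [hSΔ] at hy
      refine hull_lb (fun s hs => ?_) y hy
      rw [dotp_neg_right]
      linarith [abs_le.mp (hbd s hs) |>.2]
    have hseg : (0 : Fin d → ℝ) ∈ openSegment ℝ (ε • u) (-(ε • u)) := by
      refine ⟨1/2, 1/2, by norm_num, by norm_num, by norm_num, ?_⟩
      module
    have := he.2 hv hv' hseg
    have : (ε • u) (⟨0, hd⟩ : Fin d) = 0 := by rw [this]; rfl
    simp [hu, Pi.single_eq_same] at this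
    exact absurd this (ne_of_gt hεpos)
  -- dotp P e = -1
  have hge : (-1 : ℝ) ≤ dotp P e := heΔ P hPΔ
  have hle : dotp P e ≤ 0 := by
    rw [hPval]
    exact Finset.sum_nonpos fun i _ => hq0 i
  have hPint : ∃ n : ℤ, dotp P e = (n : ℝ) := by
    refine ⟨∑ i, q i, ?_⟩
    rw [hPval]; push_cast; ring
  obtain ⟨n, hn⟩ := hPint
  have hnval : n = -1 := by
    have h1 : (-1 : ℤ) ≤ n := by exact_mod_cast hn ▸ hge
    have h2 : n ≤ 0 := by exact_mod_cast hn ▸ hle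
    interval_cases n
    · rfl
    · -- case n = 0 : e is midpoint of 0 and 2e, contradiction with extremality
      exfalso
      have hall : ∀ y ∈ Δ, (0 : ℝ) ≤ dotp y e := by
        intro y hy
        have := hΔlb y hy
        rw [hn] at this
        exact_mod_cast this
      have h0d : (0 : Fin d → ℝ) ∈ dualSet Δ := by
        intro y _; rw [dotp_zero_right]; norm_num
      have h2e : (2 : ℝ) • e ∈ dualSet Δ := by
        intro y hy
        rw [dotp_smul_right]
        linarith [hall y hy]
      have hseg : e ∈ openSegment ℝ (0 : Fin d → ℝ) ((2 : ℝ) • e) := by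
        refine ⟨1/2, 1/2, by norm_num, by norm_num, by norm_num, ?_⟩
        module
      exact hene (he.2 h0d h2e hseg).symm
  -- sum of q's is -1
  have hqsum : ∑ i, q i = -1 := by
    have : ((∑ i, q i : ℤ) : ℝ) = ((-1 : ℤ) : ℝ) := by
      push_cast
      rw [← hPval, hn, hnval]; norm_num
    exact_mod_cast this
  -- exactly one index is -1
  have hex : ∃ i, q i ≠ 0 := by
    by_contra h
    push_neg at h
    rw [Finset.sum_congr rfl (fun i _ => h i)] at hqsum
    simp at hqsum
  obtain ⟨i, hi⟩ := hex
  have hile : q i ≤ -1 := by have := hqz i; omega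
  have herase : ∑ j ∈ Finset.univ.erase i, q j = -1 - q i := by
    have := Finset.add_sum_erase Finset.univ q (Finset.mem_univ i)
    omega
  have herase0 : ∑ j ∈ Finset.univ.erase i, q j = 0 := by
    have h1 : ∑ j ∈ Finset.univ.erase i, q j ≤ 0 :=
      Finset.sum_nonpos fun j _ => hqz j
    omega
  have hqi : q i = -1 := by omega
  have hrest : ∀ j ∈ Finset.univ.erase i, q j = 0 :=
    (Finset.sum_eq_zero_iff_of_nonpos fun j _ => hqz j).mp herase0
  refine ⟨i, ?_, fun j hj => ?_⟩
  · rw [hpmin i, hq i, hqi]; norm_num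
  · rw [hpmin j, hq j, hrest j (Finset.mem_erase.mpr ⟨hj, Finset.mem_univ j⟩)]
    norm_num
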